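/- Let d_1 > d_2 ≥ ... ≥ d_b ≥ 1 and fix a ∈ [2:b]. Define the modified instance D^[a] where d_a is replaced by ⌈d_1²/d_a⌉ (so community a becomes the unique largest). Then H_2(D^[a]) ≤ H_2(D), where H_2 of an instance is the sum over all non-maximal communities j of 1/(log(size of largest community) − log d_j). -/

import Mathlib

/-- For `d 1 > d 2 ≥ ... ≥ d b ≥ 1` and `a ∈ [2:b]`, replacing `d a` by `⌈d₁²/dₐ⌉`
(making community `a` the unique largest) does not increase `H₂`:
`Σ_{i∈[1:b], i≠a} 1/(log ⌈d₁²/dₐ⌉ − log dᵢ) ≤ Σ_{i=2}^b 1/(log d₁ − log dᵢ)`. -/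
theorem stmt15 (b : ℕ) (hb : 2 ≤ b) (d : ℕ → ℕ)
    (h12 : d 2 < d 1)
    (hmono : ∀ i ∈ Finset.Icc 2 b, ∀ j ∈ Finset.Icc 2 b, i ≤ j → d j ≤ d i)
    (hpos : 1 ≤ d b)
    (a : ℕ) (ha : a ∈ Finset.Icc 2 b) :
    ∑ i ∈ (Finset.Icc 1 b).erase a,
        1 / (Real.log (⌈((d 1 : ℝ) ^ 2 / (d a : ℝ))⌉₊ : ℝ) - Real.log (d i))
      ≤ ∑ i ∈ Finset.Icc 2 b, 1 / (Real.log (d 1) - Real.log (d i)) := by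
  obtain ⟨ha2, hab⟩ := Finset.mem_Icc.mp ha
  have hb2 : (2:ℕ) ∈ Finset.Icc 2 b := Finset.mem_Icc.mpr ⟨le_refl 2, hb⟩
  have hbb : b ∈ Finset.Icc 2 b := Finset.mem_Icc.mpr ⟨hb, le_refl b⟩
  have hdi1 : ∀ i ∈ Finset.Icc 2 b, 1 ≤ d i := fun i hi =>
    le_trans hpos (hmono i hi b hbb (Finset.mem_Icc.mp hi).2)
  have hdilt : ∀ i ∈ Finset.Icc 2 b, d i < d 1 := fun i hi =>
    lt_of_le_of_lt (hmono 2 hb2 i hi (Finset.mem_Icc.mp hi).1) h12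
  have hda1 : 1 ≤ d a := hdi1 a ha
  have hdalt : d a < d 1 := hdilt a ha
  have hdapos : (0:ℝ) < (d a : ℝ) := by exact_mod_cast hda1
  have hd1pos : (0:ℝ) < (d 1 : ℝ) := by
    have : 1 ≤ d 1 := le_of_lt (lt_of_le_of_lt hda1 hdalt)
    exact_mod_cast this
  set M : ℝ := (⌈((d 1 : ℝ) ^ 2 / (d a : ℝ))⌉₊ : ℝ) with hMdef
  have hxpos : (0:ℝ) < (d 1 : ℝ) ^ 2 / (d a : ℝ) := by positivity
  have hMx : (d 1 : ℝ) ^ 2 / (d a : ℝ) ≤ M := Nat.le_ceil _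
  have hlogx : Real.log ((d 1 : ℝ) ^ 2 / (d a : ℝ))
      = 2 * Real.log (d 1) - Real.log (d a) := by
    rw [Real.log_div (by positivity) (ne_of_gt hdapos), Real.log_pow]
    push_cast; ring
  have hlogM : 2 * Real.log (d 1) - Real.log (d a) ≤ Real.log M := by
    rw [← hlogx]; exact Real.log_le_log hxpos hMx
  have hposa : 0 < Real.log (d 1) - Real.log (d a) := by
    have : Real.log (d a) < Real.log (d 1) :=
      Real.log_lt_log hdapos (by exact_mod_cast hdalt)
    linarith
  have hkey1 : Real.log (d 1) - Real.log (d a) ≤ Real.log M - Real.log (d 1) := by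
    linarith
  have hlogM1 : Real.log (d 1) ≤ Real.log M := by linarith
  -- decompose LHS
  have h1mem : (1:ℕ) ∈ (Finset.Icc 1 b).erase a :=
    Finset.mem_erase.mpr ⟨by omega, Finset.mem_Icc.mpr ⟨le_refl 1, by omega⟩⟩
  have hset : ((Finset.Icc 1 b).erase a).erase 1 = (Finset.Icc 2 b).erase a := by
    rw [Finset.erase_right_comm, Finset.Icc_erase_left, ← Finset.Icc_add_one_left_eq_Ioc]
    rfl
  rw [← Finset.add_sum_erase _ _ h1mem, hset,
      ← Finset.add_sum_erase _ _ ha]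
  apply add_le_add
  · apply one_div_le_one_div_of_le hposa hkey1
  · apply Finset.sum_le_sum
    intro i hi
    obtain ⟨hine, hi2⟩ := Finset.mem_erase.mp hi
    have hipos : (0:ℝ) < (d i : ℝ) := by exact_mod_cast hdi1 i hi2
    have hposi : 0 < Real.log (d 1) - Real.log (d i) := by
      have : Real.log (d i) < Real.log (d 1) :=
        Real.log_lt_log hipos (by exact_mod_cast hdilt i hi2)
      linarith
    exact one_div_le_one_div_of_le hposi (by linarith)
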